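/- Assume γ < 0 (write the functional with −γ, γ > 0), a > 0 and 2 < p < 4. If a < K₁ γ^{(4−p)/2} c^{3−p} with K₁ = (1/2^{(4−p)/2})·(1/K_GN)·p/(2^{3−p}(p−2)^{p/2}(4−p)^{(4−p)/2}), then for every u ∈ H¹(ℝ²) with ‖u‖₂² = c one has Q(u) = A(u) + γc²/4 − a(p−2)/p·C(u) > 0. In particular Λ(c) = {u ∈ S(c) : Q(u)=0} is empty. -/

import Mathlib

open MeasureTheory

noncomputable section

private lemma keyE (γ p c KGN : ℝ) (hγ : 0 < γ) (hp : 2 < p) (hp4 : p < 4)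
    (hc : 0 < c) (hKGN : 0 < KGN) :
    ((1 / 2 ^ ((4 - p) / 2)) * (1 / KGN)
        * (p / (2 ^ (3 - p) * (p - 2) ^ (p / 2) * (4 - p) ^ ((4 - p) / 2))))
      * γ ^ ((4 - p) / 2) * c ^ (3 - p)
      * ((p - 2) * KGN * c / p * ((p - 2) / 2) ^ ((p - 2) / 2))
    = (γ * c ^ 2 / (4 * (4 - p))) ^ ((4 - p) / 2) := by
  have hp2 : (0:ℝ) < p - 2 := by linarith
  have h4p : (0:ℝ) < 4 - p := by linarith
  have hp0 : (0:ℝ) < p := by linarith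
  have h2 : (0:ℝ) < 2 := by norm_num
  have hB : (0:ℝ) < γ * c ^ 2 / (4 * (4 - p)) := by positivity
  have hL : (0:ℝ) < ((1 / 2 ^ ((4 - p) / 2)) * (1 / KGN)
        * (p / (2 ^ (3 - p) * (p - 2) ^ (p / 2) * (4 - p) ^ ((4 - p) / 2))))
      * γ ^ ((4 - p) / 2) * c ^ (3 - p)
      * ((p - 2) * KGN * c / p * ((p - 2) / 2) ^ ((p - 2) / 2)) := by positivity
  have hR : (0:ℝ) < (γ * c ^ 2 / (4 * (4 - p))) ^ ((4 - p) / 2) := by positivity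
  apply Real.log_injOn_pos (Set.mem_Ioi.2 hL) (Set.mem_Ioi.2 hR)
  have l4 : Real.log 4 = 2 * Real.log 2 := by
    rw [show (4:ℝ) = 2 ^ (2:ℕ) by norm_num, Real.log_pow]; norm_num
  have lhalf : Real.log ((p - 2) / 2) = Real.log (p - 2) - Real.log 2 :=
    Real.log_div hp2.ne' (by norm_num)
  have ne1 : (2:ℝ) ^ ((4 - p) / 2) ≠ 0 := by positivity
  have ne2 : (2:ℝ) ^ (3 - p) ≠ 0 := by positivity
  have ne3 : (p - 2) ^ (p / 2) ≠ 0 := by positivity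
  have ne4 : (4 - p) ^ ((4 - p) / 2) ≠ 0 := by positivity
  have ne5 : ((p-2)/2 : ℝ) ^ ((p - 2) / 2) ≠ 0 := by positivity
  rw [Real.log_rpow hB, Real.log_div (by positivity) (by positivity),
    Real.log_mul hγ.ne' (by positivity), Real.log_pow,
    Real.log_mul (by norm_num) h4p.ne', l4,
    Real.log_mul (by positivity) (by positivity),
    Real.log_mul (by positivity) (by positivity),
    Real.log_mul (by positivity) (by positivity),
    Real.log_mul (by positivity) (by positivity),
    Real.log_mul (by positivity) (by positivity),
    Real.log_div (by norm_num) ne1,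
    Real.log_div (by norm_num) hKGN.ne',
    Real.log_div hp0.ne' (by positivity),
    Real.log_mul (mul_ne_zero ne2 ne3) ne4,
    Real.log_mul ne2 ne3,
    Real.log_mul (by positivity) ne5,
    Real.log_div (by positivity) hp0.ne',
    Real.log_mul (by positivity) hc.ne',
    Real.log_mul hp2.ne' hKGN.ne',
    Real.log_rpow h2, Real.log_rpow h2, Real.log_rpow hp2, Real.log_rpow h4p,
    Real.log_rpow hγ, Real.log_rpow hc,
    Real.log_rpow (show (0:ℝ) < (p - 2) / 2 by positivity),
    lhalf, Real.log_one]
  push_cast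
  ring


/-- The kinetic energy `A(u) = ∫_{ℝ²} |∇u|²`. -/
def gradNormSq (u : EuclideanSpace ℝ (Fin 2) → ℝ) : ℝ :=
  ∫ x : EuclideanSpace ℝ (Fin 2), ‖fderiv ℝ u x‖ ^ 2

/-- `C(u) = ∫_{ℝ²} |u|^p`. -/
def Cpow (p : ℝ) (u : EuclideanSpace ℝ (Fin 2) → ℝ) : ℝ :=
  ∫ x : EuclideanSpace ℝ (Fin 2), |u x| ^ p

/-- Negative-`γ` case (written with `−γ`, `γ > 0`), `a > 0`, `2 < p < 4`: if
`a < K₁ γ^{(4−p)/2} c^{3−p}` then `Q(u) = A(u) + γc²/4 − a(p−2)/p C(u) > 0` for every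
`u ∈ S(c)` (so that `Λ(c)` is empty). -/
theorem Q_pos_of_a_small
    (γ a p c KGN : ℝ) (hγ : 0 < γ) (ha : 0 < a) (hp : 2 < p) (hp4 : p < 4)
    (hc : 0 < c) (hKGN : 0 < KGN)
    (hsmall : a < ((1 / 2 ^ ((4 - p) / 2)) * (1 / KGN)
        * (p / (2 ^ (3 - p) * (p - 2) ^ (p / 2) * (4 - p) ^ ((4 - p) / 2))))
      * γ ^ ((4 - p) / 2) * c ^ (3 - p)) :
    ∀ u : EuclideanSpace ℝ (Fin 2) → ℝ,
      (∫ x : EuclideanSpace ℝ (Fin 2), (u x) ^ 2) = c →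
      Cpow p u ≤ KGN * (gradNormSq u) ^ ((p - 2) / 2) * c →
      0 < gradNormSq u + γ * c ^ 2 / 4 - a * (p - 2) / p * Cpow p u := by
  intro u _ hGN
  have hp2 : (0:ℝ) < p - 2 := by linarith
  have h4p : (0:ℝ) < 4 - p := by linarith
  have hp0 : (0:ℝ) < p := by linarith
  set s : ℝ := (p - 2) / 2 with hs_def
  set t : ℝ := (4 - p) / 2 with ht_def
  have hs0 : 0 < s := by positivity
  have ht0 : 0 < t := by positivity
  have hst : s + t = 1 := by rw [hs_def, ht_def]; ring
  set A : ℝ := gradNormSq u with hA_def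
  set C : ℝ := Cpow p u with hC_def
  have hA : 0 ≤ A := by
    rw [hA_def, gradNormSq]
    exact integral_nonneg fun x => by positivity
  have hAs : 0 ≤ A ^ s := Real.rpow_nonneg hA s
  set b : ℝ := a * (p - 2) * KGN * c / p with hb_def
  have hb : 0 < b := by rw [hb_def]; positivity
  -- Step 1: bound the C-term
  have step1 : a * (p - 2) / p * C ≤ b * A ^ s := by
    have := mul_le_mul_of_nonneg_left hGN (le_of_lt (by positivity : (0:ℝ) < a * (p - 2) / p))
    calc a * (p - 2) / p * C ≤ a * (p - 2) / p * (KGN * A ^ s * c) := this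
      _ = b * A ^ s := by rw [hb_def]; ring
  -- Step 2: key smallness
  set B : ℝ := γ * c ^ 2 / (4 * (4 - p)) with hB_def
  have hBpos : 0 < B := by rw [hB_def]; positivity
  have hkey : b * s ^ s < B ^ t := by
    have hm : (0:ℝ) < (p - 2) * KGN * c / p * s ^ s := by positivity
    have h := mul_lt_mul_of_pos_right hsmall hm
    have hE := keyE γ p c KGN hγ hp hp4 hc hKGN
    calc b * s ^ s = a * ((p - 2) * KGN * c / p * s ^ s) := by rw [hb_def]; ring
      _ < ((1 / 2 ^ ((4 - p) / 2)) * (1 / KGN)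
        * (p / (2 ^ (3 - p) * (p - 2) ^ (p / 2) * (4 - p) ^ ((4 - p) / 2))))
        * γ ^ ((4 - p) / 2) * c ^ (3 - p) * ((p - 2) * KGN * c / p * s ^ s) := h
      _ = B ^ t := hE
  -- Step 3: Young's inequality
  set Y : ℝ := (b * s ^ s) ^ (1 / t) with hY_def
  have hY : 0 ≤ Y := Real.rpow_nonneg (by positivity) _
  have young : b * A ^ s ≤ A + t * Y := by
    have hgm := Real.geom_mean_le_arith_mean2_weighted hs0.le ht0.le
      (div_nonneg hA hs0.le) hY hst
    have e1 : (A / s) ^ s * Y ^ t = b * A ^ s := by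
      have : Y ^ t = b * s ^ s := by
        rw [hY_def, ← Real.rpow_mul (by positivity : (0:ℝ) ≤ b * s ^ s),
          one_div, inv_mul_cancel₀ ht0.ne', Real.rpow_one]
      rw [this, Real.div_rpow hA hs0.le]
      field_simp
    have e2 : s * (A / s) = A := by field_simp
    calc b * A ^ s = (A / s) ^ s * Y ^ t := e1.symm
      _ ≤ s * (A / s) + t * Y := hgm
      _ = A + t * Y := by rw [e2]
  -- Step 4: t * Y < γ c² / 4
  have hYlt : Y < B := by
    have := Real.rpow_lt_rpow (by positivity : (0:ℝ) ≤ b * s ^ s) hkey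
      (by positivity : (0:ℝ) < 1 / t)
    rw [hY_def]
    calc (b * s ^ s) ^ (1/t) < (B ^ t) ^ (1/t) := this
      _ = B := by
        rw [← Real.rpow_mul hBpos.le, mul_one_div, div_self ht0.ne', Real.rpow_one]
  have htY : t * Y < γ * c ^ 2 / 4 := by
    have h1 : t * Y < t * B := by exact mul_lt_mul_of_pos_left hYlt ht0
    have h2 : t * B ≤ γ * c ^ 2 / 4 := by
      have e : t * B = γ * c ^ 2 / 8 := by
        rw [ht_def, hB_def]; field_simp; ring
      rw [e]
      have : 0 < γ * c ^ 2 := by positivity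
      linarith
    linarith
  linarith [step1, young]
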